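/- Let $k\ge 3$, $F\in{\bf FACTOR}_3^{\ppoints,2}$ be a $3$-graph on $f$ vertices, i.e., for all $0<p,\alpha<1$ there exist $n_0$ and $\mu>0$ such that every $(n,p,\mu,\ppoints)$-dense $3$-graph $H$ with $\delta_2(H)\ge\alpha n$, $n\ge n_0$, $f\mid n$, has an $F$-factor. Then $\pi_{\ppoints}(F)=0$; that is, for every $p>0$ there exist $\mu>0$ and $n_0$ such that every $(n,p,\mu,\ppoints)$-dense $3$-graph with $n\ge n_0$ contains a copy of $F$. -/

import Mathlib

open Finset
open scoped Classical

/-- A 3-graph on `Fin n` is `(p, μ, dot)`-dense. -/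
def DotDense (n : ℕ) (E : Finset (Finset (Fin n))) (p μ : ℝ) : Prop :=
  ∀ X1 X2 X3 : Finset (Fin n),
    p * X1.card * X2.card * X3.card - μ * (n : ℝ) ^ 3 ≤
    (Finset.card ((X1 ×ˢ X2 ×ˢ X3).filter
      (fun t => ({t.1, t.2.1, t.2.2} : Finset (Fin n)) ∈ E)) : ℝ)

/-- The hypergraph on `Fin n` with edge set `E` has an `F`-factor,
where `F` has vertex type `VF` and edge set `EF`. -/
def HasFactor (VF : Type) [Fintype VF] [DecidableEq VF] (EF : Finset (Finset VF))
    (n : ℕ) (E : Finset (Finset (Fin n))) : Prop :=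
  ∃ Fam : Finset (Finset (Fin n)),
    (∀ P ∈ Fam, ∀ Q ∈ Fam, P ≠ Q → Disjoint P Q) ∧
    Fam.biUnion id = Finset.univ ∧
    ∀ P ∈ Fam, ∃ φ : VF → Fin n, Function.Injective φ ∧
      Finset.image φ Finset.univ = P ∧ ∀ e ∈ EF, e.image φ ∈ E

noncomputable def augE (n m : ℕ) (E : Finset (Finset (Fin n))) : Finset (Finset (Fin (n+m))) :=
  (Finset.univ.powersetCard 3).filter
    (fun e => (∃ v ∈ e, n ≤ (v : ℕ)) ∨ ∃ e0 ∈ E, e0.image (Fin.castAdd m) = e)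

lemma augE_card3 (n m : ℕ) (E : Finset (Finset (Fin n))) :
    ∀ e ∈ augE n m E, e.card = 3 := by
  intro e he
  have := (Finset.mem_filter.mp he).1
  simpa [Finset.mem_powersetCard_univ] using this

lemma mem_augE_high (n m : ℕ) (E : Finset (Finset (Fin n))) (e : Finset (Fin (n+m)))
    (h3 : e.card = 3) (v : Fin (n+m)) (hv : v ∈ e) (hvh : n ≤ (v : ℕ)) :
    e ∈ augE n m E := by
  simp only [augE, Finset.mem_filter, Finset.mem_powersetCard_univ]
  exact ⟨h3, Or.inl ⟨v, hv, hvh⟩⟩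

lemma mem_augE_of (n m : ℕ) (E : Finset (Finset (Fin n))) (hE3 : ∀ e ∈ E, e.card = 3)
    (e0 : Finset (Fin n)) (he0 : e0 ∈ E) : e0.image (Fin.castAdd m) ∈ augE n m E := by
  simp only [augE, Finset.mem_filter, Finset.mem_powersetCard_univ]
  constructor
  · rw [Finset.card_image_of_injective _ (Fin.castAdd_injective n m)]
    exact hE3 e0 he0
  · exact Or.inr ⟨e0, he0, rfl⟩

lemma low_mem_augE (n m : ℕ) (E : Finset (Finset (Fin n))) (e : Finset (Fin (n+m)))
    (he : e ∈ augE n m E) (hlow : ∀ v ∈ e, (v : ℕ) < n) :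
    ∃ e0 ∈ E, e0.image (Fin.castAdd m) = e := by
  rcases (Finset.mem_filter.mp he).2 with ⟨v, hv, hvh⟩ | h
  · exact absurd (hlow v hv) (by omega)
  · exact h

lemma card_high (n m : ℕ) :
    ((Finset.univ : Finset (Fin (n+m))).filter (fun w : Fin (n+m) => n ≤ (w : ℕ))).card = m := by
  have him : ((Finset.univ : Finset (Fin (n+m))).filter (fun w : Fin (n+m) => n ≤ (w : ℕ)))
      = (Finset.univ : Finset (Fin m)).image (Fin.natAdd n) := by
    ext w
    simp only [Finset.mem_filter, Finset.mem_univ, true_and, Finset.mem_image]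
    constructor
    · intro hw
      refine ⟨⟨(w : ℕ) - n, by omega⟩, ?_⟩
      have := w.isLt
      simp [Fin.ext_iff, Fin.natAdd]
      omega
    · rintro ⟨i, rfl⟩
      simp [Fin.natAdd]
  have hinj : Function.Injective (Fin.natAdd n : Fin m → Fin (n+m)) := by
    intro a b hab
    have : (Fin.natAdd n a : ℕ) = (Fin.natAdd n b : ℕ) := by rw [hab]
    simp only [Fin.coe_natAdd] at this
    exact Fin.ext (by omega)
  rw [him, Finset.card_image_of_injective _ hinj, Finset.card_univ, Fintype.card_fin]

lemma codeg (n m : ℕ) (E : Finset (Finset (Fin n))) (u v : Fin (n+m)) (huv : u ≠ v) :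
    (m : ℝ) - 2 ≤ (((augE n m E).filter (fun e => u ∈ e ∧ v ∈ e)).card : ℝ) := by
  set High := ((Finset.univ : Finset (Fin (n+m))).filter (fun w : Fin (n+m) => n ≤ (w : ℕ))) with hHigh
  have hkey : (High \ {u, v}).card ≤
      ((augE n m E).filter (fun e => u ∈ e ∧ v ∈ e)).card := by
    apply Finset.card_le_card_of_injOn (fun w => insert u (insert v {w}))
    · intro w hw
      simp only [Finset.mem_sdiff, Finset.mem_insert, Finset.mem_singleton, hHigh,
        Finset.mem_filter, Finset.mem_univ, true_and, not_or, Finset.mem_coe] at hw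
      obtain ⟨hwn, hwu, hwv⟩ := hw
      have hcard : (insert u (insert v ({w} : Finset (Fin (n+m))))).card = 3 := by
        rw [Finset.card_insert_of_notMem (by simp [huv, Ne.symm hwu]),
          Finset.card_insert_of_notMem (by simp [Ne.symm hwv]), Finset.card_singleton]
      rw [Finset.mem_coe]
      refine Finset.mem_filter.mpr ⟨?_, by simp, by simp⟩
      exact mem_augE_high n m E _ hcard w (by simp) hwn
    · intro a ha b hb hab
      simp only [Finset.coe_sdiff, Set.mem_diff, Finset.mem_coe, Finset.coe_insert,
        Set.mem_insert_iff, Finset.mem_singleton, hHigh] at ha hb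
      have haa : a ∈ insert u (insert v ({b} : Finset (Fin (n+m)))) := by
        have : a ∈ insert u (insert v ({a} : Finset (Fin (n+m)))) := by simp
        simpa only [hab] using this
      have hau : a ≠ u := by
        intro h; exact ha.2 (by simp [Finset.mem_insert, h])
      have hav : a ≠ v := by
        intro h; exact ha.2 (by simp [Finset.mem_insert, h])
      simp only [Finset.mem_insert, Finset.mem_singleton] at haa
      tauto
  have h2 : High.card ≤ (High \ {u, v}).card + 2 := by
    refine le_trans (Finset.card_le_card_sdiff_add_card (t := ({u,v} : Finset (Fin (n+m))))) ?_
    have : ({u, v} : Finset (Fin (n+m))).card ≤ 2 := by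
      refine le_trans (Finset.card_insert_le _ _) ?_
      simp
    omega
  have h3 : High.card = m := card_high n m
  have : (m : ℝ) ≤ ((High \ {u, v}).card : ℝ) + 2 := by exact_mod_cast h3 ▸ h2
  have h4 : ((High \ {u, v}).card : ℝ) ≤ _ := Nat.cast_le.mpr hkey
  linarith

set_option maxHeartbeats 2000000 in
lemma density_aug (n m : ℕ) (E : Finset (Finset (Fin n))) (hE3 : ∀ e ∈ E, e.card = 3)
    (p q μ μ' : ℝ) (hq0 : 0 ≤ q) (hq1 : q ≤ 1) (hqp : q ≤ p) (hμ0 : 0 ≤ μ)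
    (hdense : DotDense n E p μ)
    (hμ : μ * ((n+m : ℕ) : ℝ)^3 + 3 * ((n+m : ℕ) : ℝ)^2 ≤ μ' * ((n+m : ℕ) : ℝ)^3) :
    DotDense (n+m) (augE n m E) q μ' := by
  intro X1 X2 X3
  set emb : Fin n → Fin (n+m) := Fin.castAdd m with hemb
  have hembinj : Function.Injective emb := Fin.castAdd_injective n m
  set L1 := X1.filter (fun v : Fin (n+m) => (v : ℕ) < n) with hL1
  set L2 := X2.filter (fun v : Fin (n+m) => (v : ℕ) < n) with hL2
  set L3 := X3.filter (fun v : Fin (n+m) => (v : ℕ) < n) with hL3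
  set Y1 := (Finset.univ : Finset (Fin n)).filter (fun v => emb v ∈ X1) with hY1
  set Y2 := (Finset.univ : Finset (Fin n)).filter (fun v => emb v ∈ X2) with hY2
  set Y3 := (Finset.univ : Finset (Fin n)).filter (fun v => emb v ∈ X3) with hY3
  have himg : ∀ (X : Finset (Fin (n+m))),
      X.filter (fun v : Fin (n+m) => (v : ℕ) < n) =
        ((Finset.univ : Finset (Fin n)).filter (fun v => emb v ∈ X)).image emb := by
    intro X
    ext v
    simp only [Finset.mem_filter, Finset.mem_image, Finset.mem_univ, true_and]
    constructor
    · rintro ⟨hvX, hvn⟩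
      exact ⟨⟨(v : ℕ), hvn⟩, by simpa [hemb, Fin.ext_iff] using hvX, by simp [hemb, Fin.ext_iff]⟩
    · rintro ⟨w, hw, rfl⟩
      exact ⟨hw, w.isLt⟩
  have hY1L : Y1.card = L1.card := by
    rw [hL1, himg X1, Finset.card_image_of_injective _ hembinj]
  have hY2L : Y2.card = L2.card := by
    rw [hL2, himg X2, Finset.card_image_of_injective _ hembinj]
  have hY3L : Y3.card = L3.card := by
    rw [hL3, himg X3, Finset.card_image_of_injective _ hembinj]
  set Lw : Fin (n+m) × Fin (n+m) × Fin (n+m) → Prop :=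
    fun t => (t.1 : ℕ) < n ∧ (t.2.1 : ℕ) < n ∧ (t.2.2 : ℕ) < n with hLw
  set dst : Fin (n+m) × Fin (n+m) × Fin (n+m) → Prop :=
    fun t => t.1 ≠ t.2.1 ∧ t.1 ≠ t.2.2 ∧ t.2.1 ≠ t.2.2 with hdst
  set S := (X1 ×ˢ X2 ×ˢ X3).filter
    (fun t => ({t.1, t.2.1, t.2.2} : Finset (Fin (n+m))) ∈ augE n m E) with hS
  set T := (Y1 ×ˢ Y2 ×ˢ Y3).filter
    (fun t => ({t.1, t.2.1, t.2.2} : Finset (Fin n)) ∈ E) with hT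
  set D := (X1 ×ˢ X2 ×ˢ X3).filter (fun t => ¬ Lw t) with hD
  have hsplit : (S.filter Lw).card + (S.filter (fun t => ¬ Lw t)).card = S.card :=
    Finset.card_filter_add_card_filter_not _
  -- A ≥ T
  have hA : T.card ≤ (S.filter Lw).card := by
    apply Finset.card_le_card_of_injOn (fun t => (emb t.1, emb t.2.1, emb t.2.2))
    · intro t ht
      simp only [hT, Finset.mem_filter, Finset.mem_product, Finset.mem_coe] at ht
      obtain ⟨⟨h1, h2, h3⟩, hedge⟩ := ht
      simp only [Finset.mem_filter, Finset.mem_product, hS, hLw, Finset.mem_coe]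
      have hset : ({emb t.1, emb t.2.1, emb t.2.2} : Finset (Fin (n+m))) =
          ({t.1, t.2.1, t.2.2} : Finset (Fin n)).image emb := by
        simp [Finset.image_insert]
      refine ⟨⟨⟨?_, ?_, ?_⟩, ?_⟩, ?_, ?_, ?_⟩
      · simpa [hY1] using h1
      · simpa [hY2] using h2
      · simpa [hY3] using h3
      · rw [hset]; exact mem_augE_of n m E hE3 _ hedge
      · exact (t.1).isLt
      · exact (t.2.1).isLt
      · exact (t.2.2).isLt
    · intro a _ b _ hab
      simp only [Prod.mk.injEq] at hab
      exact Prod.ext (hembinj hab.1) (Prod.ext (hembinj hab.2.1) (hembinj hab.2.2))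
  -- B ≥ D.filter dst
  have hB : (D.filter dst).card ≤ (S.filter (fun t => ¬ Lw t)).card := by
    apply Finset.card_le_card
    intro t ht
    simp only [hD, Finset.mem_filter] at ht
    obtain ⟨⟨htX, htnl⟩, hd1, hd2, hd3⟩ := ht
    simp only [hS, Finset.mem_filter]
    refine ⟨⟨htX, ?_⟩, htnl⟩
    have hcard : ({t.1, t.2.1, t.2.2} : Finset (Fin (n+m))).card = 3 := by
      rw [Finset.card_insert_of_notMem (by simp [hd1, hd2]),
        Finset.card_insert_of_notMem (by simp [hd3]), Finset.card_singleton]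
    simp only [hLw, not_and_or, not_lt] at htnl
    rcases htnl with h | h | h
    · exact mem_augE_high n m E _ hcard t.1 (by simp) h
    · exact mem_augE_high n m E _ hcard t.2.1 (by simp) h
    · exact mem_augE_high n m E _ hcard t.2.2 (by simp) h
  have hDsplit : (D.filter dst).card + (D.filter (fun t => ¬ dst t)).card = D.card :=
    Finset.card_filter_add_card_filter_not _
  -- bad triples ≤ 3 N²
  have hbad : (D.filter (fun t => ¬ dst t)).card ≤ 3 * (n+m) ^ 2 := by
    have inj2 : ∀ (P : Fin (n+m) × Fin (n+m) × Fin (n+m) → Prop) [DecidablePred P]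
        (g : Fin (n+m) × Fin (n+m) × Fin (n+m) → Fin (n+m) × Fin (n+m)),
        (∀ a b, P a → P b → g a = g b → a = b) →
        ((Finset.univ : Finset (Fin (n+m) × Fin (n+m) × Fin (n+m))).filter P).card ≤ (n+m) ^ 2 := by
      intro P _ g hg
      calc ((Finset.univ : Finset (Fin (n+m) × Fin (n+m) × Fin (n+m))).filter P).card
          ≤ ((Finset.univ : Finset (Fin (n+m))) ×ˢ (Finset.univ : Finset (Fin (n+m)))).card := by
            apply Finset.card_le_card_of_injOn g (fun _ _ => by simp [Finset.mem_product])
            intro a ha b hb hab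
            simp only [Finset.mem_coe, Finset.mem_filter] at ha hb
            exact hg a b ha.2 hb.2 hab
        _ = (n+m) ^ 2 := by simp [sq]
    have hsub : D.filter (fun t => ¬ dst t) ⊆
        ((Finset.univ : Finset (Fin (n+m) × Fin (n+m) × Fin (n+m))).filter (fun t => t.1 = t.2.1)) ∪
        ((Finset.univ : Finset (Fin (n+m) × Fin (n+m) × Fin (n+m))).filter (fun t => t.1 = t.2.2)) ∪
        ((Finset.univ : Finset (Fin (n+m) × Fin (n+m) × Fin (n+m))).filter (fun t => t.2.1 = t.2.2)) := by
      intro t ht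
      simp only [Finset.mem_filter, hdst, not_and_or, not_ne_iff] at ht
      simp only [Finset.mem_union, Finset.mem_filter, Finset.mem_univ, true_and]
      tauto
    have e1 := inj2 (fun t => t.1 = t.2.1) (fun t => (t.1, t.2.2))
      (by rintro ⟨a1, a2, a3⟩ ⟨b1, b2, b3⟩ h1' h2' h3'; simp_all [Prod.ext_iff])
    have e2 := inj2 (fun t => t.1 = t.2.2) (fun t => (t.1, t.2.1))
      (by rintro ⟨a1, a2, a3⟩ ⟨b1, b2, b3⟩ h1' h2' h3'; simp_all [Prod.ext_iff])
    have e3 := inj2 (fun t => t.2.1 = t.2.2) (fun t => (t.1, t.2.1))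
      (by rintro ⟨a1, a2, a3⟩ ⟨b1, b2, b3⟩ h1' h2' h3'; simp_all [Prod.ext_iff])
    calc (D.filter (fun t => ¬ dst t)).card ≤ _ := Finset.card_le_card hsub
      _ ≤ _ + _ := Finset.card_union_le _ _
      _ ≤ 3 * (n+m) ^ 2 := by
          refine le_trans (Nat.add_le_add_right (Finset.card_union_le _ _) _) ?_
          omega
  -- product split
  have hprodfilter : (X1 ×ˢ X2 ×ˢ X3).filter Lw = L1 ×ˢ L2 ×ˢ L3 := by
    ext t
    simp only [Finset.mem_filter, Finset.mem_product, hLw, hL1, hL2, hL3]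
    tauto
  have hprodsplit : (L1 ×ˢ L2 ×ˢ L3).card + D.card = (X1 ×ˢ X2 ×ˢ X3).card := by
    rw [← hprodfilter]
    exact Finset.card_filter_add_card_filter_not _
  have hTlow := hdense Y1 Y2 Y3
  -- assemble over ℝ
  have hprods : (L1.card : ℝ) * L2.card * L3.card + D.card
      = (X1.card : ℝ) * X2.card * X3.card := by
    have h := hprodsplit
    simp only [Finset.card_product] at h
    have h2 : L1.card * L2.card * L3.card + D.card = X1.card * X2.card * X3.card := by
      rw [mul_assoc, mul_assoc]; exact h
    exact_mod_cast h2
  have hLX1 : L1.card ≤ X1.card := Finset.card_le_card (Finset.filter_subset _ _)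
  have hLX2 : L2.card ≤ X2.card := Finset.card_le_card (Finset.filter_subset _ _)
  have hLX3 : L3.card ≤ X3.card := Finset.card_le_card (Finset.filter_subset _ _)
  have hnN : ((n : ℝ)) ^ 3 ≤ (((n+m) : ℕ) : ℝ) ^ 3 := by
    have h1 : (n : ℝ) ≤ (((n+m) : ℕ) : ℝ) := by exact_mod_cast Nat.le_add_right n m
    have h0 : (0:ℝ) ≤ (n : ℝ) := by positivity
    exact pow_le_pow_left₀ h0 h1 3
  -- final arithmetic
  -- goal already in terms of S
  have c1 : (0:ℝ) ≤ (L1.card : ℝ) := by positivity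
  have c2 : (0:ℝ) ≤ (L2.card : ℝ) := by positivity
  have c3 : (0:ℝ) ≤ (L3.card : ℝ) := by positivity
  have hac : (L1.card : ℝ) * L2.card * L3.card ≤ (X1.card : ℝ) * X2.card * X3.card := by
    have b1 : (L1.card : ℝ) ≤ X1.card := by exact_mod_cast hLX1
    have b2 : (L2.card : ℝ) ≤ X2.card := by exact_mod_cast hLX2
    have b3 : (L3.card : ℝ) ≤ X3.card := by exact_mod_cast hLX3
    have d1 : (0:ℝ) ≤ (X2.card : ℝ) := by positivity
    have d2 : (0:ℝ) ≤ (X3.card : ℝ) := by positivity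
    apply mul_le_mul (mul_le_mul b1 b2 c2 (le_trans c1 b1)) b3 c3
    positivity
  have hql : q * ((L1.card : ℝ) * L2.card * L3.card) ≤
      p * ((L1.card : ℝ) * L2.card * L3.card) := by
    apply mul_le_mul_of_nonneg_right hqp
    positivity
  have hmono : q * ((X1.card : ℝ) * X2.card * X3.card)
      ≤ q * ((L1.card : ℝ) * L2.card * L3.card)
        + ((X1.card : ℝ) * X2.card * X3.card - (L1.card : ℝ) * L2.card * L3.card) := by
    nlinarith [mul_nonneg (by linarith : (0:ℝ) ≤ 1 - q)
      (by linarith : (0:ℝ) ≤ (X1.card : ℝ) * X2.card * X3.card - (L1.card : ℝ) * L2.card * L3.card)]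
  have hSreal : (T.card : ℝ) + ((D.card : ℝ) - (D.filter (fun t => ¬ dst t)).card) ≤ S.card := by
    have r1 : (T.card : ℝ) ≤ (S.filter Lw).card := by exact_mod_cast hA
    have r2 : ((D.filter dst).card : ℝ) ≤ (S.filter (fun t => ¬ Lw t)).card := by
      exact_mod_cast hB
    have r3 : ((D.filter dst).card : ℝ) + ((D.filter (fun t => ¬ dst t)).card : ℝ)
        = D.card := by exact_mod_cast hDsplit
    have r4 : ((S.filter Lw).card : ℝ) + ((S.filter (fun t => ¬ Lw t)).card : ℝ) = S.card := by
      exact_mod_cast hsplit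
    linarith
  have hbadR : ((D.filter (fun t => ¬ dst t)).card : ℝ) ≤ 3 * (((n+m):ℕ) : ℝ) ^ 2 := by
    exact_mod_cast hbad
  have hTY : (p : ℝ) * L1.card * L2.card * L3.card - μ * (n:ℝ) ^ 3 ≤ (T.card : ℝ) := by
    rw [← hY1L, ← hY2L, ← hY3L]
    exact_mod_cast hTlow
  nlinarith [hprods, hSreal, hbadR, hTY, hql, hmono, hμ, hnN, hac,
    mul_le_mul_of_nonneg_left hnN hμ0]

lemma arith_aux (f n : ℕ) (hf : 3 ≤ f) (hn : (f+1)^4 ≤ n) :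
    ∃ m : ℕ, f ∣ (n + m) ∧ m * f < n + m ∧ 3 ≤ m ∧
      ((n : ℝ) + m) + 4 * ((f : ℝ) + 1) ≤ 2 * ((f : ℝ) + 1) * m := by
  have hf0 : 0 < f := by omega
  set t := n / f with ht
  set s := (n + t) / f with hs
  set r := n % f with hr
  set r2 := (n + t) % f with hr2
  have hmod : f * t + r = n := Nat.div_add_mod n f
  have hmod2 : f * s + r2 = n + t := Nat.div_add_mod (n + t) f
  have hrlt : r < f := Nat.mod_lt _ hf0
  have hr2lt : r2 < f := Nat.mod_lt _ hf0
  have hC : f * (s + 1) = f * s + f := by ring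
  have ht2 : f ^ 2 ≤ t := by
    rw [ht, Nat.le_div_iff_mul_le hf0]
    calc f ^ 2 * f = f ^ 3 := by ring
      _ ≤ (f + 1) ^ 3 := Nat.pow_le_pow_left (by omega) 3
      _ ≤ (f + 1) ^ 4 := Nat.pow_le_pow_right (by omega) (by omega)
      _ ≤ n := hn
  have hf2 : 9 ≤ f ^ 2 := by calc 9 = 3^2 := rfl
    _ ≤ f^2 := Nat.pow_le_pow_left hf 2
  have hns : n ≤ f * (s + 1) := by omega
  refine ⟨f * (s + 1) - n, ⟨s + 1, by omega⟩, ?_, ?_, ?_⟩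
  · -- m * f < n + m
    set m := f * (s + 1) - n with hm
    have hmr : m + r2 = t + f := by omega
    have h1 : (m : ℝ) + r2 = (t : ℝ) + f := by exact_mod_cast hmr
    have h2 : (f : ℝ) * t + r = n := by exact_mod_cast hmod
    have h3 : (r2 : ℝ) ≤ (f : ℝ) - 1 := by
      have : r2 + 1 ≤ f := hr2lt
      have := (Nat.cast_le (α := ℝ)).mpr this
      push_cast at this; linarith
    have h4 : (0 : ℝ) ≤ r := by positivity
    have h5 : ((f : ℝ)) ^ 2 ≤ t := by exact_mod_cast ht2
    have h6 : (3 : ℝ) ≤ f := by exact_mod_cast hf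
    have target : (m : ℝ) * f < (n : ℝ) + m := by
      nlinarith [mul_nonneg (Nat.cast_nonneg (α := ℝ) r2) (Nat.cast_nonneg (α := ℝ) f)]
    exact_mod_cast target
  · -- 3 ≤ m
    omega
  · -- real inequality
    set m := f * (s + 1) - n with hm
    have hmr : m + r2 = t + f := by omega
    have h1 : (m : ℝ) + r2 = (t : ℝ) + f := by exact_mod_cast hmr
    have h2 : (f : ℝ) * t + r = n := by exact_mod_cast hmod
    have h3 : (r2 : ℝ) ≤ (f : ℝ) - 1 := by
      have : r2 + 1 ≤ f := hr2lt
      have := (Nat.cast_le (α := ℝ)).mpr this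
      push_cast at this; linarith
    have h3' : (r : ℝ) ≤ (f : ℝ) - 1 := by
      have : r + 1 ≤ f := hrlt
      have := (Nat.cast_le (α := ℝ)).mpr this
      push_cast at this; linarith
    have h4 : (0 : ℝ) ≤ r := by positivity
    have h4' : (0 : ℝ) ≤ r2 := by positivity
    have h5 : ((f : ℝ)) ^ 2 ≤ t := by exact_mod_cast ht2
    have h6 : (3 : ℝ) ≤ f := by exact_mod_cast hf
    nlinarith [mul_le_mul_of_nonneg_left h5 (by linarith : (0:ℝ) ≤ (f:ℝ)),
      mul_le_mul_of_nonneg_left h3 (by linarith : (0:ℝ) ≤ (f:ℝ))]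

theorem stmt12 (VF : Type) [Fintype VF] [DecidableEq VF]
    (f : ℕ) (hf : Fintype.card VF = f)
    (EF : Finset (Finset VF)) (hEF : ∀ e ∈ EF, e.card = 3)
    -- F ∈ FACTOR_3^{dot,2}
    (hFactor : ∀ p α : ℝ, 0 < p → p < 1 → 0 < α → α < 1 →
      ∃ (n0 : ℕ) (μ : ℝ), 0 < μ ∧ ∀ n : ℕ, n0 ≤ n → f ∣ n →
        ∀ E : Finset (Finset (Fin n)), (∀ e ∈ E, e.card = 3) →
        DotDense n E p μ →
        (∀ u v : Fin n, u ≠ v →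
          α * n ≤ ((E.filter (fun e => u ∈ e ∧ v ∈ e)).card : ℝ)) →
        HasFactor VF EF n E) :
    -- π_dot(F) = 0
    ∀ p : ℝ, 0 < p → ∃ (μ : ℝ) (n0 : ℕ), 0 < μ ∧ ∀ n : ℕ, n0 ≤ n →
      ∀ E : Finset (Finset (Fin n)), (∀ e ∈ E, e.card = 3) → DotDense n E p μ →
      ∃ φ : VF → Fin n, Function.Injective φ ∧ ∀ e ∈ EF, e.image φ ∈ E := by
  intro p hp
  rcases Nat.lt_or_ge f 3 with hf3 | hf3
  · -- trivial case: EF is empty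
    refine ⟨1, f, one_pos, ?_⟩
    intro n hn E hE3 hd
    have hVF : Fintype.card VF ≤ Fintype.card (Fin n) := by
      rw [hf, Fintype.card_fin]; exact hn
    obtain ⟨φ⟩ := Function.Embedding.nonempty_of_card_le hVF
    refine ⟨φ, φ.injective, ?_⟩
    intro e he
    exfalso
    have h3 := hEF e he
    have hle : e.card ≤ f := by
      rw [← hf, ← Finset.card_univ]
      exact Finset.card_le_card (Finset.subset_univ e)
    omega
  · -- main case
    have hfR : (3 : ℝ) ≤ f := by exact_mod_cast hf3
    have hq0 : (0 : ℝ) < min p (1/2) := lt_min hp (by norm_num)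
    have hq1 : min p (1/2) < 1 := lt_of_le_of_lt (min_le_right _ _) (by norm_num)
    set α : ℝ := 1 / (2 * ((f : ℝ) + 1)) with hα
    have hα0 : 0 < α := by rw [hα]; positivity
    have hα1 : α < 1 := by
      rw [hα, div_lt_one (by linarith)]; linarith
    obtain ⟨n0', μH, hμH, hfac⟩ := hFactor (min p (1/2)) α hq0 hq1 hα0 hα1
    refine ⟨μH / 2, max n0' (max ((f+1)^4) (⌈(6:ℝ)/μH⌉₊ + 1)), by positivity, ?_⟩
    intro n hn E hE3 hdense
    have hn1 : n0' ≤ n := le_trans (le_max_left _ _) hn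
    have hn2 : (f+1)^4 ≤ n := le_trans (le_trans (le_max_left _ _) (le_max_right _ _)) hn
    have hn3 : ⌈(6:ℝ)/μH⌉₊ + 1 ≤ n := le_trans (le_trans (le_max_right _ _) (le_max_right _ _)) hn
    obtain ⟨m, hdvd, hmf, hm3, hineq⟩ := arith_aux f n hf3 hn2
    -- μ condition
    have hNge : (n : ℝ) ≤ ((n + m : ℕ) : ℝ) := by
      push_cast; linarith [Nat.cast_nonneg (α := ℝ) m]
    have h6 : (6 : ℝ) ≤ μH * ((n + m : ℕ) : ℝ) := by
      have hc1 : ((6:ℝ)/μH) ≤ ((⌈(6:ℝ)/μH⌉₊ : ℕ) : ℝ) := Nat.le_ceil _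
      have hc2 : ((⌈(6:ℝ)/μH⌉₊ : ℕ) : ℝ) ≤ (n : ℝ) := by
        exact_mod_cast le_trans (Nat.le_succ _) hn3
      have : (6:ℝ)/μH ≤ ((n + m : ℕ) : ℝ) := by linarith
      rw [div_le_iff₀ hμH] at this
      linarith
    have hμcond : (μH/2) * ((n+m : ℕ) : ℝ)^3 + 3 * ((n+m : ℕ) : ℝ)^2 ≤ μH * ((n+m : ℕ) : ℝ)^3 := by
      have hN0 : (0 : ℝ) ≤ ((n+m : ℕ) : ℝ) := Nat.cast_nonneg _
      nlinarith [mul_nonneg (by nlinarith : (0:ℝ) ≤ μH * ((n+m:ℕ):ℝ) - 6) (sq_nonneg ((n+m:ℕ):ℝ))]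
    have hdense' : DotDense (n+m) (augE n m E) (min p (1/2)) μH :=
      density_aug n m E hE3 p (min p (1/2)) (μH/2) μH (le_of_lt hq0)
        (le_trans (min_le_right _ _) (by norm_num)) (min_le_left _ _) (by positivity)
        hdense hμcond
    -- codegree
    have hcode : ∀ u v : Fin (n+m), u ≠ v →
        α * ((n+m : ℕ) : ℝ) ≤ (((augE n m E).filter (fun e => u ∈ e ∧ v ∈ e)).card : ℝ) := by
      intro u v huv
      have h1 := codeg n m E u v huv
      have key : α * ((n+m : ℕ) : ℝ) ≤ (m : ℝ) - 2 := by
        rw [hα, div_mul_eq_mul_div, div_le_iff₀ (by linarith : (0:ℝ) < 2 * ((f:ℝ)+1))]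
        push_cast
        nlinarith [hineq]
      linarith
    have hfact := hfac (n+m) (le_trans hn1 (Nat.le_add_right n m)) hdvd (augE n m E)
      (augE_card3 n m E) hdense' hcode
    obtain ⟨Fam, hdisj, hcover, hcopy⟩ := hfact
    have hPcard : ∀ P ∈ Fam, P.card = f := by
      intro P hP
      obtain ⟨φ, hinj, himgP, _⟩ := hcopy P hP
      rw [← himgP, Finset.card_image_of_injective _ hinj, Finset.card_univ, hf]
    have hsum : Fam.card * f = n + m := by
      have hb := Finset.card_biUnion (s := Fam) (t := id)
        (fun P hP Q hQ hne => hdisj P hP Q hQ hne)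
      rw [hcover, Finset.card_univ, Fintype.card_fin] at hb
      have hs2 : ∑ P ∈ Fam, (id P).card = Fam.card * f := by
        calc ∑ P ∈ Fam, (id P).card = ∑ P ∈ Fam, f :=
              Finset.sum_congr rfl (fun P hP => hPcard P hP)
          _ = Fam.card * f := by rw [Finset.sum_const, smul_eq_mul]
      omega
    -- find a low part
    have hnm0 : 0 < n + m := by
      have h1n : 1 ≤ (f+1)^4 := Nat.one_le_pow _ _ (by omega)
      omega
    have hex : ∃ P ∈ Fam, ∀ v ∈ P, (v : ℕ) < n := by
      by_contra hcon
      push_neg at hcon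
      choose g hg1 hg2 using hcon
      have hcard : Fam.card ≤ m := by
        have hle := Finset.card_le_card_of_injOn (s := Fam)
          (t := (Finset.univ : Finset (Fin (n+m))).filter (fun w : Fin (n+m) => n ≤ (w : ℕ)))
          (fun P => if h : P ∈ Fam then g P h else (⟨0, hnm0⟩ : Fin (n+m)))
          ?_ ?_
        · rwa [card_high n m] at hle
        · intro P hP
          simp only [dif_pos (Finset.mem_coe.mp hP), Finset.mem_filter, Finset.mem_univ, true_and, Finset.mem_coe]
          exact hg2 P hP
        · intro P hP Q hQ hPQ
          simp only [Finset.mem_coe] at hP hQ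
          simp only [dif_pos hP, dif_pos hQ] at hPQ
          by_contra hne
          have hd := hdisj P hP Q hQ hne
          exact (Finset.disjoint_left.mp hd (hg1 P hP)) (hPQ ▸ hg1 Q hQ)
      have hlt := lt_of_le_of_lt (Nat.mul_le_mul_right f hcard) hmf
      exact (Nat.ne_of_lt hlt) hsum
    obtain ⟨P, hPF, hPlow⟩ := hex
    obtain ⟨φ, hφinj, hφimg, hφedges⟩ := hcopy P hPF
    have hmem : ∀ x : VF, ((φ x : ℕ)) < n := fun x =>
      hPlow (φ x) (by rw [← hφimg]; exact Finset.mem_image_of_mem _ (Finset.mem_univ x))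
    refine ⟨fun x => ⟨(φ x : ℕ), hmem x⟩, ?_, ?_⟩
    · intro a b hab
      apply hφinj
      have h := congrArg Fin.val hab
      simp only at h
      exact Fin.ext h
    · intro e he
      have h1 := hφedges e he
      have hlow : ∀ v ∈ e.image φ, (v : ℕ) < n := by
        intro v hv
        obtain ⟨x, _, rfl⟩ := Finset.mem_image.mp hv
        exact hmem x
      obtain ⟨e0, he0, heq⟩ := low_mem_augE n m E _ h1 hlow
      have hkey : (e.image (fun x => (⟨(φ x : ℕ), hmem x⟩ : Fin n))).image (Fin.castAdd m)
          = e0.image (Fin.castAdd m) := by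
        rw [heq, Finset.image_image]
        apply Finset.image_congr
        intro x _
        exact Fin.ext rfl
      have := Finset.image_injective (Fin.castAdd_injective n m) hkey
      rwa [this]
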